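/- Let k ≥ 1, N = 2k, and suppose |c_i| = 1 for all i. Define L0(n) = M₊ for n even, M₋ for n odd, and L1(n) = M₋ for n even, M₊ for n odd. Suppose the sequence (Y_n) in ℂ^N satisfies Y_{n+2} = L0(n) Y_n + L1(n) Y_{n+1} for all n ≥ 0, with Y_0 = 0 and Y_1 = B. Then the solution is eventually constant: Y_n = (D₊ + M₋) B for every n > 2. -/

import Mathlib

/-- `M₊` sends `e_{N−i+1} ↦ c_i e_i` for `1 ≤ i ≤ k` and `e_j ↦ 0` for
`1 ≤ j ≤ k` (here `N = 2k`; matrix with respect to the standard basis,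
0-indexed). -/
noncomputable def Mplus (k : ℕ) (c : Fin k → ℂ) :
    Matrix (Fin (2 * k)) (Fin (2 * k)) ℂ := fun a b =>
  if h : (a : ℕ) < k ∧ (a : ℕ) + (b : ℕ) = 2 * k - 1 then c ⟨a, h.1⟩ else 0

/-- `M₋ = M₊†` sends `e_i ↦ conj(c_i) e_{N−i+1}` for `1 ≤ i ≤ k` and
`e_j ↦ 0` for `k < j ≤ N`. -/
noncomputable def Mminus (k : ℕ) (c : Fin k → ℂ) :
    Matrix (Fin (2 * k)) (Fin (2 * k)) ℂ := fun a b =>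
  if h : (b : ℕ) < k ∧ (a : ℕ) + (b : ℕ) = 2 * k - 1 then
    starRingEnd ℂ (c ⟨b, h.1⟩) else 0

/-- `D₊` sends `e_i ↦ |c_i|² e_i` for `1 ≤ i ≤ k` and `e_j ↦ 0` for
`k < j ≤ N`. -/
noncomputable def Dplus (k : ℕ) (c : Fin k → ℂ) :
    Matrix (Fin (2 * k)) (Fin (2 * k)) ℂ := fun a b =>
  if h : a = b ∧ (a : ℕ) < k then ((‖c ⟨a, h.2⟩‖) ^ 2 : ℂ) else 0

/-- `D₋` sends `e_j ↦ |c_{N−j+1}|² e_j` for `k < j ≤ N` and `e_i ↦ 0` for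
`1 ≤ i ≤ k`. -/
noncomputable def Dminus (k : ℕ) (c : Fin k → ℂ) :
    Matrix (Fin (2 * k)) (Fin (2 * k)) ℂ := fun a b =>
  if h : a = b ∧ k ≤ (a : ℕ) then
    ((‖c ⟨2 * k - 1 - (a : ℕ), by have := a.isLt; omega⟩‖) ^ 2 : ℂ)
  else 0

/-- `L0(n) = M₊` for `n` even, `M₋` for `n` odd. -/
noncomputable def Lzero (k : ℕ) (c : Fin k → ℂ) (n : ℕ) :
    Matrix (Fin (2 * k)) (Fin (2 * k)) ℂ :=
  if Even n then Mplus k c else Mminus k c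

/-- `L1(n) = M₋` for `n` even, `M₊` for `n` odd. -/
noncomputable def Lone (k : ℕ) (c : Fin k → ℂ) (n : ℕ) :
    Matrix (Fin (2 * k)) (Fin (2 * k)) ℂ :=
  if Even n then Mminus k c else Mplus k c

lemma MpMm (k : ℕ) (c : Fin k → ℂ) : Mplus k c * Mminus k c = Dplus k c := by
  ext a b
  rw [Matrix.mul_apply]
  unfold Mplus Mminus Dplus
  by_cases hab : a = b ∧ (a : ℕ) < k
  · obtain ⟨rfl, ha⟩ := hab
    have hk2 : 2 * k - 1 - (a : ℕ) < 2 * k := by have := a.isLt; omega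
    rw [Finset.sum_eq_single (⟨2 * k - 1 - (a : ℕ), hk2⟩ : Fin (2 * k))]
    · rw [dif_pos ⟨ha, by have := a.isLt; simp; omega⟩, dif_pos ⟨ha, by simp; omega⟩,
        dif_pos ⟨rfl, ha⟩]
      simp only [Complex.mul_conj]
      norm_cast
      exact (Complex.sq_norm _).symm
    · intro j _ hj
      rcases Nat.lt_or_ge (a : ℕ) k with h | h
      · rcases eq_or_ne ((a : ℕ) + (j : ℕ)) (2 * k - 1) with h2 | h2
        · exfalso; apply hj; apply Fin.ext; simp; omega
        · rw [dif_neg (by tauto), zero_mul]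
      · rw [dif_neg (by omega), zero_mul]
    · intro h; exact absurd (Finset.mem_univ _) h
  · rw [dif_neg hab]
    apply Finset.sum_eq_zero
    intro j _
    rcases Classical.em ((a : ℕ) < k ∧ (a : ℕ) + (j : ℕ) = 2 * k - 1) with h1 | h1
    · rcases Classical.em ((b : ℕ) < k ∧ (j : ℕ) + (b : ℕ) = 2 * k - 1) with h2 | h2
      · exfalso; exact hab ⟨Fin.ext (by omega), h1.1⟩
      · rw [dif_neg h2, mul_zero]
    · rw [dif_neg h1, zero_mul]

lemma MmMm (k : ℕ) (c : Fin k → ℂ) : Mminus k c * Mminus k c = 0 := by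
  ext a b
  rw [Matrix.mul_apply]
  unfold Mminus
  simp only [Matrix.zero_apply]
  apply Finset.sum_eq_zero
  intro j _
  rcases Classical.em ((j : ℕ) < k ∧ (a : ℕ) + (j : ℕ) = 2 * k - 1) with h1 | h1
  · have h2 : ¬ ((b : ℕ) < k ∧ (j : ℕ) + (b : ℕ) = 2 * k - 1) := by
      rintro ⟨hb, hjb⟩; omega
    rw [dif_neg h2, mul_zero]
  · rw [dif_neg h1, zero_mul]

lemma MpDp (k : ℕ) (c : Fin k → ℂ) : Mplus k c * Dplus k c = 0 := by
  ext a b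
  rw [Matrix.mul_apply]
  unfold Mplus Dplus
  simp only [Matrix.zero_apply]
  apply Finset.sum_eq_zero
  intro j _
  rcases Classical.em ((a : ℕ) < k ∧ (a : ℕ) + (j : ℕ) = 2 * k - 1) with h1 | h1
  · have : ¬ (j = b ∧ (j : ℕ) < k) := by rintro ⟨rfl, h⟩; omega
    rw [dif_neg this, mul_zero]
  · rw [dif_neg h1, zero_mul]

lemma MmDp (k : ℕ) (c : Fin k → ℂ) (hc : ∀ i, ‖c i‖ = 1) :
    Mminus k c * Dplus k c = Mminus k c := by
  ext a b
  rw [Matrix.mul_apply]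
  unfold Mminus Dplus
  by_cases hb : (b : ℕ) < k ∧ (a : ℕ) + (b : ℕ) = 2 * k - 1
  · rw [dif_pos hb, Finset.sum_eq_single b]
    · rw [dif_pos hb, dif_pos ⟨rfl, hb.1⟩, hc]; simp
    · intro j _ hj
      have : ¬ (j = b ∧ (j : ℕ) < k) := by rintro ⟨rfl, _⟩; exact hj rfl
      rw [dif_neg this, mul_zero]
    · intro h; exact absurd (Finset.mem_univ _) h
  · rw [dif_neg hb]
    apply Finset.sum_eq_zero
    intro j _
    rcases Classical.em ((j : ℕ) < k ∧ (a : ℕ) + (j : ℕ) = 2 * k - 1) with h1 | h1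
    · have : ¬ (j = b ∧ (j : ℕ) < k) := by rintro ⟨rfl, _⟩; exact hb h1
      rw [dif_neg this, mul_zero]
    · rw [dif_neg h1, zero_mul]

/-- If `|c_i| = 1` for all `i`, the solution of the Cauchy problem (I) is
eventually constant: `Y_n = (D₊ + M₋) B` for every `n > 2`. -/
theorem cauchy_problem_I_constant_solution (k : ℕ) (hk : 1 ≤ k)
    (c : Fin k → ℂ) (hc : ∀ i, ‖c i‖ = 1)
    (Y : ℕ → (Fin (2 * k) → ℂ)) (B : Fin (2 * k) → ℂ)
    (hrec : ∀ n : ℕ, Y (n + 2)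
      = (Lzero k c n).mulVec (Y n) + (Lone k c n).mulVec (Y (n + 1)))
    (h0 : Y 0 = 0) (h1 : Y 1 = B) :
    ∀ n : ℕ, 2 < n → Y n = (Dplus k c + Mminus k c).mulVec B := by
  set T := Dplus k c + Mminus k c with hTdef
  have hMmT : Mminus k c * T = Mminus k c := by
    rw [hTdef, mul_add, MmMm, MmDp k c hc, add_zero]
  have hT : (Mplus k c + Mminus k c) * T = T := by
    rw [add_mul, hMmT, hTdef, mul_add, MpMm, MpDp, zero_add]
  have h2 : Y 2 = (Mminus k c).mulVec B := by
    have := hrec 0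
    simp only [Lzero, Lone, if_pos (Even.zero), h0, h1, Matrix.mulVec_zero,
      zero_add] at this
    exact this
  have h3 : Y 3 = T.mulVec B := by
    have := hrec 1
    rw [h1, h2] at this
    simp only [Lzero, Lone, if_neg (Nat.not_even_iff_odd.2 odd_one)] at this
    rw [this, Matrix.mulVec_mulVec, MpMm, hTdef, Matrix.add_mulVec, add_comm]
  have h4 : Y 4 = T.mulVec B := by
    have := hrec 2
    rw [h2, h3] at this
    simp only [Lzero, Lone, if_pos (even_two : Even 2)] at this
    rw [this, Matrix.mulVec_mulVec, Matrix.mulVec_mulVec, MpMm, hMmT, hTdef,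
      Matrix.add_mulVec]
  have hsum : ∀ n, Lzero k c n + Lone k c n = Mplus k c + Mminus k c := by
    intro n
    unfold Lzero Lone
    split_ifs
    · rfl
    · exact add_comm _ _
  have aux : ∀ m : ℕ, Y (m + 3) = T.mulVec B ∧ Y (m + 4) = T.mulVec B := by
    intro m
    induction m with
    | zero => exact ⟨h3, h4⟩
    | succ n ih =>
      refine ⟨ih.2, ?_⟩
      have hr := hrec (n + 3)
      rw [show n + 3 + 1 = n + 4 from rfl, ih.1, ih.2] at hr
      have : n + 1 + 4 = n + 3 + 2 := by omega
      rw [this, hr, Matrix.mulVec_mulVec, Matrix.mulVec_mulVec,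
        ← Matrix.add_mulVec, ← add_mul, hsum, hT]
  intro n hn
  obtain ⟨m, rfl⟩ : ∃ m, n = m + 3 := ⟨n - 3, by omega⟩
  exact (aux m).1
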